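/- arXiv:0807.2351 — 3 statements merged into one kernel-verified Lean document; each statement's English description precedes it below -/
import Mathlib

section
/- Let (A, d, ·) be a dga and a ∈ A^{odd} with da + a·a = 0. Then the element P(a) := Σ_{n≥0} 1 ⊗ a^{⊗n} in the normalized Hochschild chain complex C̄_•(A,A) = ∏_{n≥0} A ⊗ Ā^{⊗n} is a cycle: δ(P(a)) = 0. -/
open scoped TensorProduct

noncomputable section

/-- `Ā = A / k·1`. -/
abbrev HAbar (k A : Type) [Field k] [Ring A] [Algebra k A] : Type :=
  A ⧸ (Submodule.span k {(1 : A)})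

/-- The degree-`n` part `A ⊗ Ā^{⊗n}` of the normalized Hochschild chain complex. -/
abbrev HChains (k A : Type) [Field k] [Ring A] [Algebra k A] (n : ℕ) : Type :=
  A ⊗[k] (PiTensorProduct k (fun _ : Fin n => HAbar k A))

/-- The pure tensor `a₀ ⊗ ā₁ ⊗ ⋯ ⊗ āₙ`. -/
def hpt (k : Type) {A : Type} [Field k] [Ring A] [Algebra k A] {n : ℕ}
    (a : Fin (n + 1) → A) : HChains k A n :=
  a 0 ⊗ₜ[k] (PiTensorProduct.tprod k
    (fun i => (Submodule.Quotient.mk (a i.succ) : HAbar k A)))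

section helpers
variable (k : Type) {A : Type} [Field k] [Ring A] [Algebra k A]

lemma hpt_update_succ {n : ℕ} (b : Fin (n + 1) → A) (i : Fin n) (x : A) :
    hpt k (Function.update b i.succ x) =
      b 0 ⊗ₜ[k] PiTensorProduct.tprod k
        (Function.update (fun t : Fin n => (Submodule.Quotient.mk (b t.succ) : HAbar k A)) i
          (Submodule.Quotient.mk x)) := by
  unfold hpt
  rw [Function.update_of_ne (Fin.succ_ne_zero i).symm]
  have hfun : (fun t : Fin n =>
      (Submodule.Quotient.mk (Function.update b i.succ x t.succ) : HAbar k A))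
      = Function.update (fun t : Fin n => (Submodule.Quotient.mk (b t.succ) : HAbar k A)) i
          (Submodule.Quotient.mk x) := by
    funext t
    simp only [Function.update_apply, ← Fin.succ_inj (a := t) (b := i)]
    split_ifs <;> rfl
  rw [hfun]

lemma hpt_update_succ_addzero {n : ℕ} (b : Fin (n + 1) → A) (i : Fin n) (x y : A)
    (h : x + y = 0) :
    hpt k (Function.update b i.succ x) + hpt k (Function.update b i.succ y) = 0 := by
  rw [hpt_update_succ, hpt_update_succ, ← TensorProduct.tmul_add,
    ← (PiTensorProduct.tprod k).map_update_add]
  have : (Submodule.Quotient.mk x + Submodule.Quotient.mk y : HAbar k A)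
      = Submodule.Quotient.mk (x + y) := rfl
  rw [this, h]
  have : (Submodule.Quotient.mk (0:A) : HAbar k A) = 0 := rfl
  rw [this, (PiTensorProduct.tprod k).map_update_zero, TensorProduct.tmul_zero]

lemma sum_if_deg (M t : ℕ) (D : ℤ) (ht1 : 1 ≤ t) (ht : t ≤ M) :
    (∑ j : Fin M, if (j : ℕ) < t then (if (j : ℕ) = 0 then 0 else D) else 0)
      = ((t : ℤ) - 1) * D := by
  rw [Fin.sum_univ_eq_sum_range (fun j => if j < t then (if j = 0 then (0:ℤ) else D) else 0)]
  rw [← Finset.sum_subset (Finset.range_subset_range.2 ht)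
      (by intro x _ hx; simp only [Finset.mem_range, not_lt] at hx; simp [Nat.not_lt.2 hx])]
  have : ∀ j ∈ Finset.range t, (if j < t then (if j = 0 then (0:ℤ) else D) else 0)
      = D - (if j = 0 then D else 0) := by
    intro j hj
    simp only [Finset.mem_range] at hj
    simp only [hj, if_true]
    split_ifs <;> ring
  rw [Finset.sum_congr rfl this, Finset.sum_sub_distrib, Finset.sum_const,
    Finset.sum_ite_eq' (Finset.range t) 0 (fun _ => D)]
  simp only [Finset.mem_range, ht1, Nat.lt_of_lt_of_le Nat.zero_lt_one ht1, if_true,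
    Finset.card_range, nsmul_eq_mul]
  ring

end helpers

section summands
variable (k : Type) {A : Type} [Field k] [Ring A] [Algebra k A]

lemma cons_const_ne_zero {N : ℕ} (y x : A) (t : Fin (N + 1)) (ht : t ≠ 0) :
    (Fin.cons y (fun _ : Fin N => x) : Fin (N+1) → A) t = x := by
  obtain ⟨j, rfl⟩ := Fin.eq_succ_of_ne_zero ht
  simp

lemma summand1_zero (m : ℕ) (D : ℤ) (d : A →ₗ[k] A) (hd1 : d 1 = 0) (a : A)
    (b : Fin (m + 1) → A) (hb : b = Fin.cons (1 : A) fun _ : Fin m => a) :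
    ((-1 : k) ^ (if (((0 : Fin (m + 1)) : ℕ)) = 0 then
        (if (((0 : Fin (m + 1)) : ℕ)) = 0 then (0 : ℤ) else D) else
        (∑ j : Fin (m + 1), if (j : ℕ) < (((0 : Fin (m + 1)) : ℕ)) then
            (if (j : ℕ) = 0 then (0 : ℤ) else D) else 0)
          + ((((0 : Fin (m + 1)) : ℕ)) : ℤ) - 1)) •
      hpt k (Function.update b 0 (d (b 0))) = 0 := by
  have h : hpt k (Function.update b 0 (d (b 0))) = 0 := by
    unfold hpt
    rw [Function.update_self, hb, Fin.cons_zero, hd1, TensorProduct.zero_tmul]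
  rw [h, smul_zero]

lemma summand1_succ (m : ℕ) (D : ℤ) (hDe : Even (D + 1)) (d : A →ₗ[k] A) (a : A)
    (i : Fin m) (b : Fin (m + 1) → A) (hb : b = Fin.cons (1 : A) fun _ : Fin m => a) :
    ((-1 : k) ^ (if ((i.succ : Fin (m + 1)) : ℕ) = 0 then
        (if (((0 : Fin (m + 1)) : ℕ)) = 0 then (0 : ℤ) else D) else
        (∑ j : Fin (m + 1), if (j : ℕ) < ((i.succ : Fin (m + 1)) : ℕ) then
            (if (j : ℕ) = 0 then (0 : ℤ) else D) else 0)
          + (((i.succ : Fin (m + 1)) : ℕ) : ℤ) - 1)) •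
      hpt k (Function.update b i.succ (d (b i.succ))) =
    hpt k (Function.update b i.succ (d a)) := by
  subst hb
  have hv : ((i.succ : Fin (m + 1)) : ℕ) = (i : ℕ) + 1 := rfl
  rw [hv, if_neg (Nat.succ_ne_zero (i : ℕ)),
    sum_if_deg (m + 1) ((i : ℕ) + 1) D (Nat.succ_le_succ (Nat.zero_le _))
      (Nat.succ_le_succ (Nat.le_of_lt i.isLt)),
    show (((((i : ℕ) + 1 : ℕ)) : ℤ) - 1) * D + ((((i : ℕ) + 1 : ℕ)) : ℤ) - 1
        = ((i : ℕ) : ℤ) * (D + 1) by push_cast; ring,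
    Even.neg_one_zpow (hDe.mul_left _), one_smul, Fin.cons_succ]

lemma summand2_zero (m : ℕ) (D : ℤ) (a : A)
    (c : Fin (m + 2) → A) (hc : c = Fin.cons (1 : A) fun _ : Fin (m + 1) => a) :
    ((-1 : k) ^ (if (((0 : Fin (m + 1)) : ℕ)) = 0 then
        (if (((0 : Fin (m + 2)) : ℕ)) = 0 then (0 : ℤ) else D) else
        (∑ j : Fin (m + 2), if (j : ℕ) < (((0 : Fin (m + 1)) : ℕ)) then
            (if (j : ℕ) = 0 then (0 : ℤ) else D) else 0)
          + ((((0 : Fin (m + 1)) : ℕ)) : ℤ) - 1)) •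
      hpt k (fun j : Fin (m + 1) =>
        if (j : ℕ) < (((0 : Fin (m + 1)) : ℕ)) then c (Fin.castSucc j)
        else if (j : ℕ) = (((0 : Fin (m + 1)) : ℕ)) then c (Fin.castSucc j) * c j.succ
        else c j.succ) =
    hpt k (fun _ : Fin (m + 1) => a) := by
  subst hc
  rw [if_pos (show (((0 : Fin (m + 1)) : ℕ)) = 0 by simp),
    if_pos (show (((0 : Fin (m + 2)) : ℕ)) = 0 by simp), zpow_zero, one_smul]
  congr 1
  funext t
  refine Fin.cases ?_ (fun s => ?_) t
  · simp
  · have h1 : ¬ ((s.succ : Fin (m + 1)) : ℕ) < ((0 : Fin (m + 1)) : ℕ) := by simp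
    have h2 : ¬ ((s.succ : Fin (m + 1)) : ℕ) = ((0 : Fin (m + 1)) : ℕ) := by simp
    rw [if_neg h1, if_neg h2]
    exact cons_const_ne_zero (1 : A) a _ (Fin.succ_ne_zero _)

lemma summand2_succ (m : ℕ) (D : ℤ) (hDe : Even (D + 1)) (a : A) (i : Fin m)
    (c : Fin (m + 2) → A) (hc : c = Fin.cons (1 : A) fun _ : Fin (m + 1) => a) :
    ((-1 : k) ^ (if ((i.succ : Fin (m + 1)) : ℕ) = 0 then
        (if (((0 : Fin (m + 2)) : ℕ)) = 0 then (0 : ℤ) else D) else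
        (∑ j : Fin (m + 2), if (j : ℕ) < ((i.succ : Fin (m + 1)) : ℕ) then
            (if (j : ℕ) = 0 then (0 : ℤ) else D) else 0)
          + (((i.succ : Fin (m + 1)) : ℕ) : ℤ) - 1)) •
      hpt k (fun j : Fin (m + 1) =>
        if (j : ℕ) < ((i.succ : Fin (m + 1)) : ℕ) then c (Fin.castSucc j)
        else if (j : ℕ) = ((i.succ : Fin (m + 1)) : ℕ) then c (Fin.castSucc j) * c j.succ
        else c j.succ) =
    hpt k (Function.update (Fin.cons (1 : A) fun _ : Fin m => a) i.succ (a * a)) := by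
  subst hc
  have hv : ((i.succ : Fin (m + 1)) : ℕ) = (i : ℕ) + 1 := rfl
  rw [hv, if_neg (Nat.succ_ne_zero (i : ℕ)),
    sum_if_deg (m + 2) ((i : ℕ) + 1) D (Nat.succ_le_succ (Nat.zero_le _))
      (Nat.succ_le_succ (Nat.le_of_lt (Nat.lt_succ_of_lt i.isLt))),
    show (((((i : ℕ) + 1 : ℕ)) : ℤ) - 1) * D + ((((i : ℕ) + 1 : ℕ)) : ℤ) - 1
        = ((i : ℕ) : ℤ) * (D + 1) by push_cast; ring,
    Even.neg_one_zpow (hDe.mul_left _), one_smul]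
  congr 1
  funext t
  rw [Function.update_apply]
  rcases Nat.lt_trichotomy (t : ℕ) ((i : ℕ) + 1) with hlt | heq | hgt
  · rw [if_pos hlt, if_neg (by
      intro h; rw [h, Fin.val_succ] at hlt; exact lt_irrefl _ hlt)]
    -- c (castSucc t) = b t
    refine Fin.cases ?_ (fun s => ?_) t
    · simp
    · rw [show Fin.castSucc (Fin.succ s) = Fin.succ (Fin.castSucc s) from
        (Fin.succ_castSucc s).symm]
      simp
  · have ht : t = i.succ := by
      apply Fin.ext; rw [heq]; rfl
    rw [if_neg (by omega), if_pos heq, if_pos ht,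
      cons_const_ne_zero (1 : A) a _ (by
        simp only [ne_eq, ← Fin.val_eq_val, Fin.coe_castSucc, Fin.val_zero, heq]; omega),
      cons_const_ne_zero (1 : A) a _ (Fin.succ_ne_zero _)]
  · have ht : ¬ t = i.succ := by
      intro h; rw [h] at hgt; simp [Fin.val_succ] at hgt
    rw [if_neg (by omega), if_neg (by omega), if_neg ht,
      cons_const_ne_zero (1 : A) a _ (Fin.succ_ne_zero _),
      cons_const_ne_zero (1 : A) a _ (by
        simp only [ne_eq, ← Fin.val_eq_val, Fin.val_zero]; omega)]

lemma cyc_term (m : ℕ) (D : ℤ) (hDe : Even (D + 1)) (a : A)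
    (c : Fin (m + 2) → A) (hc : c = Fin.cons (1 : A) fun _ : Fin (m + 1) => a) :
    ((-1 : k) ^ (((if ((Fin.last (m + 1) : Fin (m + 2)) : ℕ) = 0 then (0 : ℤ) else D) + 1) *
        ((∑ j : Fin (m + 2), if (j : ℕ) < m + 1 then
            (if (j : ℕ) = 0 then (0 : ℤ) else D) else 0) + (m : ℤ)))) •
      hpt k (fun j : Fin (m + 1) =>
        if (j : ℕ) = 0 then c (Fin.last (m + 1)) * c 0
        else c (Fin.castSucc j)) =
    hpt k (fun _ : Fin (m + 1) => a) := by
  subst hc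
  rw [if_neg (by simp [Fin.val_last]),
    sum_if_deg (m + 2) (m + 1) D (Nat.succ_le_succ (Nat.zero_le _)) (by omega),
    show ((((m + 1 : ℕ)) : ℤ) - 1) * D + (m : ℤ) = (m : ℤ) * (D + 1) by push_cast; ring,
    Even.neg_one_zpow (hDe.mul_right _), one_smul]
  congr 1
  funext t
  refine Fin.cases ?_ (fun s => ?_) t
  · rw [if_pos (show (((0 : Fin (m + 1)) : ℕ)) = 0 by simp),
      cons_const_ne_zero (1 : A) a _ (by
      simp only [ne_eq, ← Fin.val_eq_val, Fin.val_last, Fin.val_zero]; omega),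
      Fin.cons_zero, mul_one]
  · rw [if_neg (by simp),
      cons_const_ne_zero (1 : A) a _ (by
        simp only [ne_eq, ← Fin.val_eq_val, Fin.coe_castSucc, Fin.val_succ, Fin.val_zero]
        omega)]

end summands

/-- For a dga `A` and `a ∈ A^{odd}` with `da + a·a = 0`, the element
`P(a) = Σ_{n≥0} 1 ⊗ a^{⊗n} ∈ C̄_•(A,A) = ∏_{n≥0} A ⊗ Ā^{⊗n}` is a Hochschild cycle,
`δ(P(a)) = 0`.  The Hochschild boundary `δ` of the product complex is described through its
two graded components: `δd` (internal differential part, preserving tensor length) and `δm`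
(multiplication of adjacent factors together with the cyclic term, decreasing tensor length
by one); the statement `δ(P(a)) = 0` reads `δd (P(a)_m) + δm (P(a)_{m+1}) = 0` for all `m`. -/
theorem P_of_MC_element_is_hochschild_cycle
    (k A : Type) [Field k] [Ring A] [Algebra k A]
    (𝒜 : ℤ → Submodule k A)
    (hone : (1 : A) ∈ 𝒜 0)
    (hmul : ∀ (i j : ℤ) (x y : A), x ∈ 𝒜 i → y ∈ 𝒜 j → x * y ∈ 𝒜 (i + j))
    (hinternal : DirectSum.IsInternal 𝒜)
    (d : A →ₗ[k] A) (hd1 : d 1 = 0) (hdd : ∀ x, d (d x) = 0)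
    (hd_deg : ∀ (i : ℤ) (x : A), x ∈ 𝒜 i → d x ∈ 𝒜 (i + 1))
    (hLeib : ∀ (i : ℤ) (x y : A), x ∈ 𝒜 i → d (x * y) = d x * y + ((-1 : k) ^ i) • (x * d y))
    (δd : ∀ m : ℕ, HChains k A m →ₗ[k] HChains k A m)
    (δm : ∀ m : ℕ, HChains k A (m + 1) →ₗ[k] HChains k A m)
    -- internal-differential part of the Hochschild boundary on pure tensors
    (hδd : ∀ (m : ℕ) (deg : Fin (m + 1) → ℤ) (a : Fin (m + 1) → A),
      (∀ i, a i ∈ 𝒜 (deg i)) →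
      δd m (hpt k a) =
        ∑ i : Fin (m + 1),
          ((-1 : k) ^ (if (i : ℕ) = 0 then deg 0 else
              (∑ j : Fin (m + 1), if (j : ℕ) < (i : ℕ) then deg j else 0)
                + ((i : ℕ) : ℤ) - 1)) •
            hpt k (Function.update a i (d (a i))))
    -- multiplication part (adjacent products and cyclic term) on pure tensors
    (hδm : ∀ (m : ℕ) (deg : Fin (m + 2) → ℤ) (a : Fin (m + 2) → A),
      (∀ i, a i ∈ 𝒜 (deg i)) →
      δm m (hpt k a) =
        (∑ i : Fin (m + 1),
          ((-1 : k) ^ (if (i : ℕ) = 0 then deg 0 else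
              (∑ j : Fin (m + 2), if (j : ℕ) < (i : ℕ) then deg j else 0)
                + ((i : ℕ) : ℤ) - 1)) •
            hpt k (fun j : Fin (m + 1) =>
              if (j : ℕ) < (i : ℕ) then a (Fin.castSucc j)
              else if (j : ℕ) = (i : ℕ) then a (Fin.castSucc j) * a j.succ
              else a j.succ))
        - ((-1 : k) ^ ((deg (Fin.last (m + 1)) + 1) *
              ((∑ j : Fin (m + 2), if (j : ℕ) < m + 1 then deg j else 0) + (m : ℤ)))) •
            hpt k (fun j : Fin (m + 1) =>
              if (j : ℕ) = 0 then a (Fin.last (m + 1)) * a 0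
              else a (Fin.castSucc j)))
    (a : A) (D : ℤ) (ha : a ∈ 𝒜 D) (hD : Odd D)   -- a ∈ A^{odd}
    (hMC : d a + a * a = 0) :                       -- Maurer-Cartan equation
    ∀ m : ℕ,
      δd m (hpt k (Fin.cons (1 : A) (fun _ : Fin m => a)))
        + δm m (hpt k (Fin.cons (1 : A) (fun _ : Fin (m + 1) => a))) = 0 := by
  intro m
  have hDe : Even (D + 1) := by rcases hD with ⟨t, ht⟩; exact ⟨t + 1, by omega⟩
  have hmemb : ∀ i : Fin (m + 1),
      ((Fin.cons (1 : A) fun _ : Fin m => a : Fin (m + 1) → A)) i ∈ 𝒜 (if (i : ℕ) = 0 then 0 else D) := by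
    intro i
    refine Fin.cases ?_ (fun j => ?_) i
    · simpa using hone
    · simpa using ha
  have hmemc : ∀ i : Fin (m + 2),
      ((Fin.cons (1 : A) fun _ : Fin (m + 1) => a : Fin (m + 2) → A)) i ∈ 𝒜 (if (i : ℕ) = 0 then 0 else D) := by
    intro i
    refine Fin.cases ?_ (fun j => ?_) i
    · simpa using hone
    · simpa using ha
  rw [hδd m (fun j : Fin (m + 1) => if (j : ℕ) = 0 then (0 : ℤ) else D)
        (Fin.cons (1 : A) fun _ : Fin m => a) hmemb,
      hδm m (fun j : Fin (m + 2) => if (j : ℕ) = 0 then (0 : ℤ) else D)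
        (Fin.cons (1 : A) fun _ : Fin (m + 1) => a) hmemc]
  beta_reduce
  rw [Fin.sum_univ_succ]
  beta_reduce
  rw [summand1_zero k m D d hd1 a _ rfl, zero_add]
  rw [Finset.sum_congr rfl (fun (i : Fin m) _ => summand1_succ k m D hDe d a i _ rfl)]
  rw [Fin.sum_univ_succ]
  beta_reduce
  rw [summand2_zero k m D a _ rfl]
  rw [Finset.sum_congr rfl (fun (i : Fin m) _ => summand2_succ k m D hDe a i _ rfl)]
  rw [cyc_term k m D hDe a _ rfl]
  rw [add_sub_cancel_left, ← Finset.sum_add_distrib]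
  exact Finset.sum_eq_zero fun i _ => hpt_update_succ_addzero k _ i _ _ hMC
end
end

section
/- Let (A, d, ·) be a dga and a ∈ A^{odd} with da + a·a = 0. Then the element R(a) := Σ_{n≥0} 1 ⊗ a^{⊗n}, viewed in the negative cyclic complex (C̄_•(A,A)[[u]], δ + uB), is a cycle: (δ + uB)(R(a)) = 0. In particular B(R(a)) = 0 in the normalized complex. -/
open scoped TensorProduct

noncomputable section

lemma hpt_zero_left (k : Type) {A : Type} [Field k] [Ring A] [Algebra k A] {n : ℕ}
    (a : Fin (n + 1) → A) (h : a 0 = 0) : hpt k a = 0 := by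
  unfold hpt; rw [h, TensorProduct.zero_tmul]

lemma hpt_zero_slot (k : Type) {A : Type} [Field k] [Ring A] [Algebra k A] {n : ℕ}
    (a : Fin (n + 1) → A) (j : Fin n) (h : a j.succ ∈ Submodule.span k {(1 : A)}) :
    hpt k a = 0 := by
  unfold hpt
  have hz : (fun i : Fin n => (Submodule.Quotient.mk (a i.succ) : HAbar k A)) j = 0 :=
    (Submodule.Quotient.mk_eq_zero _).mpr h
  rw [MultilinearMap.map_coord_zero _ j hz, TensorProduct.tmul_zero]

lemma hpt_update_add (k : Type) {A : Type} [Field k] [Ring A] [Algebra k A] {n : ℕ}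
    (a : Fin (n + 1) → A) (j : Fin n) (x y : A) :
    hpt k (Function.update a j.succ x) + hpt k (Function.update a j.succ y)
      = hpt k (Function.update a j.succ (x + y)) := by
  have h0 : ∀ z : A, Function.update a j.succ z 0 = a 0 := fun z =>
    Function.update_of_ne (Fin.succ_ne_zero j).symm z a
  have hf : ∀ z : A, (fun i : Fin n =>
      (Submodule.Quotient.mk ((Function.update a j.succ z) i.succ) : HAbar k A))
      = Function.update (fun i : Fin n => (Submodule.Quotient.mk (a i.succ) : HAbar k A)) j
          (Submodule.Quotient.mk z) := by
    intro z; funext i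
    by_cases hij : i = j
    · subst hij; rw [Function.update_self, Function.update_self]
    · rw [Function.update_of_ne hij,
        Function.update_of_ne (fun hc => hij (Fin.succ_injective _ hc))]
  unfold hpt
  rw [h0, h0, h0, hf, hf, hf, show (Submodule.Quotient.mk (x + y) : HAbar k A)
      = Submodule.Quotient.mk x + Submodule.Quotient.mk y from Submodule.Quotient.mk_add _,
    MultilinearMap.map_update_add, TensorProduct.tmul_add]

lemma sum_if_lt (D : ℤ) : ∀ (m c : ℕ),
    (∑ j : Fin m, if (j : ℕ) < c then D else 0) = (min c m : ℕ) * D := by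
  intro m
  induction m with
  | zero => intro c; simp
  | succ m ih =>
    intro c
    rw [Fin.sum_univ_castSucc]
    simp only [Fin.coe_castSucc, Fin.val_last]
    rw [ih c]
    rcases Nat.lt_or_ge m c with h | h
    · rw [if_pos h]
      have h1 : min c m = m := Nat.min_eq_right (Nat.le_of_lt h)
      have h2 : min c (m+1) = m + 1 := Nat.min_eq_right h
      rw [h1, h2]; push_cast; ring
    · rw [if_neg (Nat.not_lt.mpr h)]
      rw [Nat.min_eq_left h, Nat.min_eq_left (Nat.le_succ_of_le h), add_zero]

lemma sum_cons_if_lt (D : ℤ) (m c : ℕ) (hc2 : c ≤ m + 1) :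
    (∑ j : Fin (m+1), if (j : ℕ) < c then (Fin.cons 0 fun _ : Fin m => D : Fin (m+1) → ℤ) j else 0)
      = ((c - 1 : ℕ) : ℤ) * D := by
  rw [Fin.sum_univ_succ]
  simp only [Fin.cons_zero, Fin.cons_succ, Fin.val_succ, Fin.val_zero, ite_self, zero_add]
  have h : ∀ j : Fin m, ((if (j:ℕ)+1 < c then D else 0) = if (j:ℕ) < c - 1 then D else 0) :=
    fun j => if_congr (by omega) rfl rfl
  rw [Finset.sum_congr rfl (fun j _ => h j), sum_if_lt, Nat.min_eq_left (by omega)]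

lemma my_sign_one (k : Type) [Field k] (D : ℤ) (hD : Odd D) (c : ℕ) (hc : 1 ≤ c) :
    (-1 : k) ^ (((c - 1 : ℕ) : ℤ) * D + ((c : ℕ) : ℤ) - 1) = 1 := by
  apply Even.neg_one_zpow
  have h1 : ((c - 1 : ℕ) : ℤ) = (c : ℤ) - 1 := by omega
  rw [h1, show ((c:ℤ) - 1) * D + (c:ℤ) - 1 = ((c:ℤ) - 1) * (D + 1) by ring]
  exact (hD.add_one).mul_left _


set_option maxHeartbeats 1000000 in
lemma aux_Bzero (k A : Type) [Field k] [Ring A] [Algebra k A]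
    (𝒜 : ℤ → Submodule k A) (hone : (1 : A) ∈ 𝒜 0)
    (Bup : ∀ m : ℕ, HChains k A m →ₗ[k] HChains k A (m + 1))
    (hB : ∀ (m : ℕ) (deg : Fin (m + 1) → ℤ) (a : Fin (m + 1) → A),
      (∀ i, a i ∈ 𝒜 (deg i)) →
      Bup m (hpt k a) =
        ∑ i : Fin (m + 1),
          ((-1 : k) ^
            (((∑ j : Fin (m + 1), if (i : ℕ) ≤ (j : ℕ) then deg j else 0)
                + (m : ℤ) - ((i : ℕ) : ℤ) + 1) *
             ((∑ j : Fin (m + 1), if (j : ℕ) < (i : ℕ) then deg j else 0)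
                + ((i : ℕ) : ℤ) - 1))) •
            hpt k (Fin.cons (1 : A) (fun j : Fin (m + 1) => a (i + j))))
    (a : A) (D : ℤ) (ha : a ∈ 𝒜 D) :
    ∀ m : ℕ, Bup m (hpt k (Fin.cons (1 : A) (fun _ : Fin m => a))) = 0 := by
  have hmem1 : (1 : A) ∈ Submodule.span k {(1 : A)} := Submodule.mem_span_singleton_self 1
  intro m
  set t : Fin (m + 1) → A := Fin.cons (1 : A) fun _ : Fin m => a with ht
  have hdeg : ∀ i, t i ∈ 𝒜 ((Fin.cons 0 fun _ : Fin m => D : Fin (m + 1) → ℤ) i) := by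
    intro i
    refine Fin.cases ?_ (fun j => ?_) i
    · rw [ht]; simpa using hone
    · rw [ht]; simpa using ha
  rw [hB m (Fin.cons 0 fun _ : Fin m => D) t hdeg]
  refine Finset.sum_eq_zero fun i _ => ?_
  have hz : hpt k (Fin.cons (1 : A) (fun j : Fin (m + 1) => t (i + j))) = 0 := by
    refine hpt_zero_slot k _ (-i) ?_
    simp only [Fin.cons_succ, add_neg_cancel]
    rw [ht, Fin.cons_zero]
    exact hmem1
  rw [hz, smul_zero]

set_option maxHeartbeats 2000000 in
lemma aux_key (k A : Type) [Field k] [Ring A] [Algebra k A]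
    (𝒜 : ℤ → Submodule k A) (hone : (1 : A) ∈ 𝒜 0)
    (d : A →ₗ[k] A) (hd1 : d 1 = 0)
    (δd : ∀ m : ℕ, HChains k A m →ₗ[k] HChains k A m)
    (δm : ∀ m : ℕ, HChains k A (m + 1) →ₗ[k] HChains k A m)
    (hδd : ∀ (m : ℕ) (deg : Fin (m + 1) → ℤ) (a : Fin (m + 1) → A),
      (∀ i, a i ∈ 𝒜 (deg i)) →
      δd m (hpt k a) =
        ∑ i : Fin (m + 1),
          ((-1 : k) ^ (if (i : ℕ) = 0 then deg 0 else
              (∑ j : Fin (m + 1), if (j : ℕ) < (i : ℕ) then deg j else 0)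
                + ((i : ℕ) : ℤ) - 1)) •
            hpt k (Function.update a i (d (a i))))
    (hδm : ∀ (m : ℕ) (deg : Fin (m + 2) → ℤ) (a : Fin (m + 2) → A),
      (∀ i, a i ∈ 𝒜 (deg i)) →
      δm m (hpt k a) =
        (∑ i : Fin (m + 1),
          ((-1 : k) ^ (if (i : ℕ) = 0 then deg 0 else
              (∑ j : Fin (m + 2), if (j : ℕ) < (i : ℕ) then deg j else 0)
                + ((i : ℕ) : ℤ) - 1)) •
            hpt k (fun j : Fin (m + 1) =>
              if (j : ℕ) < (i : ℕ) then a (Fin.castSucc j)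
              else if (j : ℕ) = (i : ℕ) then a (Fin.castSucc j) * a j.succ
              else a j.succ))
        - ((-1 : k) ^ ((deg (Fin.last (m + 1)) + 1) *
              ((∑ j : Fin (m + 2), if (j : ℕ) < m + 1 then deg j else 0) + (m : ℤ)))) •
            hpt k (fun j : Fin (m + 1) =>
              if (j : ℕ) = 0 then a (Fin.last (m + 1)) * a 0
              else a (Fin.castSucc j)))
    (a : A) (D : ℤ) (ha : a ∈ 𝒜 D) (hD : Odd D)
    (hMC : d a + a * a = 0) (m : ℕ) :
    δd m (hpt k (Fin.cons (1 : A) (fun _ : Fin m => a)))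
      + δm m (hpt k (Fin.cons (1 : A) (fun _ : Fin (m + 1) => a))) = 0 := by
  classical
  have hD1 : Even (D + 1) := hD.add_one
  set t1 : Fin (m + 1) → A := Fin.cons (1 : A) fun _ : Fin m => a with ht1
  set t2 : Fin (m + 2) → A := Fin.cons (1 : A) fun _ : Fin (m + 1) => a with ht2
  have ht1a : ∀ j : Fin (m + 1), j ≠ 0 → t1 j = a := by
    intro j hj
    rw [← Fin.succ_pred j hj, ht1, Fin.cons_succ]
  have ht2a : ∀ j : Fin (m + 2), j ≠ 0 → t2 j = a := by
    intro j hj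
    rw [← Fin.succ_pred j hj, ht2, Fin.cons_succ]
  have ht2c : ∀ j : Fin (m + 1), t2 (Fin.castSucc j) = t1 j := by
    intro j
    refine Fin.cases ?_ (fun j => ?_) j
    · rw [show Fin.castSucc (0 : Fin (m + 1)) = 0 from rfl, ht1, ht2,
        Fin.cons_zero, Fin.cons_zero]
    · rw [← Fin.succ_castSucc, ht1, ht2, Fin.cons_succ, Fin.cons_succ]
  have hdeg1 : ∀ i, t1 i ∈ 𝒜 ((Fin.cons 0 fun _ : Fin m => D : Fin (m + 1) → ℤ) i) := by
    intro i
    refine Fin.cases ?_ (fun j => ?_) i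
    · rw [ht1]; simpa using hone
    · rw [ht1]; simpa using ha
  have hdeg2 : ∀ i, t2 i ∈ 𝒜 ((Fin.cons 0 fun _ : Fin (m + 1) => D : Fin (m + 2) → ℤ) i) := by
    intro i
    refine Fin.cases ?_ (fun j => ?_) i
    · rw [ht2]; simpa using hone
    · rw [ht2]; simpa using ha
  have e1 : δd m (hpt k t1) = ∑ i : Fin (m + 1),
      (if i = 0 then 0 else hpt k (Function.update t1 i (d a))) := by
    rw [hδd m (Fin.cons 0 fun _ : Fin m => D) t1 hdeg1]
    refine Finset.sum_congr rfl fun i _ => ?_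
    rcases eq_or_ne i 0 with h | h
    · subst h
      rw [if_pos rfl]
      have h0 : Function.update t1 0 (d (t1 0)) 0 = 0 := by
        rw [Function.update_self, ht1, Fin.cons_zero, hd1]
      rw [hpt_zero_left k _ h0, smul_zero]
    · have hc : 1 ≤ (i : ℕ) := Nat.one_le_iff_ne_zero.mpr fun hc => h (Fin.ext hc)
      rw [if_neg h, if_neg (Nat.one_le_iff_ne_zero.mp hc),
        sum_cons_if_lt D m (i : ℕ) (le_of_lt i.isLt),
        my_sign_one k D hD (i : ℕ) hc, one_smul, ht1a i h]
  have e2 : δm m (hpt k t2) = (∑ i : Fin (m + 1),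
      (if i = 0 then hpt k (fun _ : Fin (m + 1) => a)
        else hpt k (Function.update t1 i (a * a))))
      - hpt k (fun _ : Fin (m + 1) => a) := by
    rw [hδm m (Fin.cons 0 fun _ : Fin (m + 1) => D) t2 hdeg2]
    congr 1
    · refine Finset.sum_congr rfl fun i _ => ?_
      rcases eq_or_ne i 0 with h | h
      · subst h
        simp only [Fin.val_zero, ite_true, if_true, Nat.not_lt_zero, ite_false, if_false]
        rw [Fin.cons_zero, zpow_zero, one_smul]
        congr 1
        funext j
        rcases eq_or_ne (j : ℕ) 0 with hj | hj
        · have hj0 : j = 0 := Fin.ext hj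
          subst hj0
          simp only [Fin.val_zero, ↓reduceIte]
          rw [show Fin.castSucc (0 : Fin (m + 1)) = 0 from rfl, ht2, Fin.cons_zero,
            Fin.cons_succ, one_mul]
        · simp only [hj, ↓reduceIte]
          exact ht2a j.succ (Fin.succ_ne_zero j)
      · have hc : 1 ≤ (i : ℕ) := Nat.one_le_iff_ne_zero.mpr fun hc => h (Fin.ext hc)
        rw [if_neg h, if_neg (Nat.one_le_iff_ne_zero.mp hc),
          sum_cons_if_lt D (m + 1) (i : ℕ) (le_of_lt (Nat.lt_succ_of_lt i.isLt)),
          my_sign_one k D hD (i : ℕ) hc, one_smul]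
        congr 1
        funext j
        rcases Nat.lt_trichotomy (j : ℕ) (i : ℕ) with hj | hj | hj
        · rw [if_pos hj, Function.update_of_ne (Fin.ne_of_val_ne (Nat.ne_of_lt hj))]
          exact ht2c j
        · have hj0 : j = i := Fin.ext hj
          subst hj0
          rw [if_neg (lt_irrefl _), if_pos rfl, Function.update_self,
            ht2c j, ht1a j h, ht2a j.succ (Fin.succ_ne_zero j)]
        · have hj0 : j ≠ 0 := by
            intro hh
            rw [hh] at hj
            simp only [Fin.val_zero] at hj
            omega
          rw [if_neg (by omega), if_neg (by omega),
            Function.update_of_ne (Fin.ne_of_val_ne (by omega)),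
            ht2a j.succ (Fin.succ_ne_zero j), ht1a j hj0]
    · have hlast : (Fin.cons 0 fun _ : Fin (m + 1) => D : Fin (m + 2) → ℤ)
          (Fin.last (m + 1)) = D := by
        rw [← Fin.succ_last, Fin.cons_succ]
      rw [hlast, Even.neg_one_zpow (hD1.mul_right _), one_smul]
      congr 1
      funext j
      rcases eq_or_ne (j : ℕ) 0 with hj | hj
      · rw [if_pos hj, ht2a (Fin.last (m + 1)) (by
          intro hh
          have := congrArg Fin.val hh
          simp only [Fin.val_last, Fin.val_zero] at this
          omega), ht2, Fin.cons_zero, mul_one]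
      · rw [if_neg hj, ht2c j, ht1a j (fun hh => hj (by rw [hh]; rfl))]
  have hzero : ∀ i : Fin (m + 1), i ≠ 0 →
      ((if i = 0 then (0 : HChains k A m) else hpt k (Function.update t1 i (d a))) +
       (if i = 0 then hpt k (fun _ : Fin (m + 1) => a)
         else hpt k (Function.update t1 i (a * a)))) = 0 := by
    intro i h
    rw [if_neg h, if_neg h]
    have hadd := hpt_update_add k t1 (i.pred h) (d a) (a * a)
    rw [Fin.succ_pred] at hadd
    rw [hadd, hMC]
    exact hpt_zero_slot k _ (i.pred h)
      (by rw [Fin.succ_pred, Function.update_self]; exact zero_mem _)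
  rw [e1, e2, ← add_sub_assoc, ← Finset.sum_add_distrib,
    Fintype.sum_eq_single (0 : Fin (m + 1)) hzero, if_pos rfl, if_pos rfl,
    zero_add, sub_self]


/-- For a dga `A` and `a ∈ A^{odd}` with `da + a·a = 0`, the element
`R(a) = Σ_{n≥0} 1 ⊗ a^{⊗n}`, included at `u⁰` into the negative cyclic complex
`(C̄_•(A,A)[[u]], δ + uB)`, is a cycle: `(δ + uB)(R(a)) = 0`; in particular `B(R(a)) = 0`.
Negative cyclic chains are modelled as `c : ℕ → ∀ m, A ⊗ Ā^{⊗m}` (`c i` is the coefficient of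
`uⁱ`), with `((δ + uB) c) i = δ (c i) + B (c (i-1))`, stated through the graded components
`δd`, `δm` of the Hochschild boundary and `Bup` of Connes' operator. -/
theorem R_of_MC_element_is_negative_cyclic_cycle
    (k A : Type) [Field k] [Ring A] [Algebra k A]
    (𝒜 : ℤ → Submodule k A)
    (hone : (1 : A) ∈ 𝒜 0)
    (hmul : ∀ (i j : ℤ) (x y : A), x ∈ 𝒜 i → y ∈ 𝒜 j → x * y ∈ 𝒜 (i + j))
    (hinternal : DirectSum.IsInternal 𝒜)
    (d : A →ₗ[k] A) (hd1 : d 1 = 0) (hdd : ∀ x, d (d x) = 0)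
    (hd_deg : ∀ (i : ℤ) (x : A), x ∈ 𝒜 i → d x ∈ 𝒜 (i + 1))
    (hLeib : ∀ (i : ℤ) (x y : A), x ∈ 𝒜 i → d (x * y) = d x * y + ((-1 : k) ^ i) • (x * d y))
    (δd : ∀ m : ℕ, HChains k A m →ₗ[k] HChains k A m)
    (δm : ∀ m : ℕ, HChains k A (m + 1) →ₗ[k] HChains k A m)
    (Bup : ∀ m : ℕ, HChains k A m →ₗ[k] HChains k A (m + 1))
    (hδd : ∀ (m : ℕ) (deg : Fin (m + 1) → ℤ) (a : Fin (m + 1) → A),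
      (∀ i, a i ∈ 𝒜 (deg i)) →
      δd m (hpt k a) =
        ∑ i : Fin (m + 1),
          ((-1 : k) ^ (if (i : ℕ) = 0 then deg 0 else
              (∑ j : Fin (m + 1), if (j : ℕ) < (i : ℕ) then deg j else 0)
                + ((i : ℕ) : ℤ) - 1)) •
            hpt k (Function.update a i (d (a i))))
    (hδm : ∀ (m : ℕ) (deg : Fin (m + 2) → ℤ) (a : Fin (m + 2) → A),
      (∀ i, a i ∈ 𝒜 (deg i)) →
      δm m (hpt k a) =
        (∑ i : Fin (m + 1),
          ((-1 : k) ^ (if (i : ℕ) = 0 then deg 0 else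
              (∑ j : Fin (m + 2), if (j : ℕ) < (i : ℕ) then deg j else 0)
                + ((i : ℕ) : ℤ) - 1)) •
            hpt k (fun j : Fin (m + 1) =>
              if (j : ℕ) < (i : ℕ) then a (Fin.castSucc j)
              else if (j : ℕ) = (i : ℕ) then a (Fin.castSucc j) * a j.succ
              else a j.succ))
        - ((-1 : k) ^ ((deg (Fin.last (m + 1)) + 1) *
              ((∑ j : Fin (m + 2), if (j : ℕ) < m + 1 then deg j else 0) + (m : ℤ)))) •
            hpt k (fun j : Fin (m + 1) =>
              if (j : ℕ) = 0 then a (Fin.last (m + 1)) * a 0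
              else a (Fin.castSucc j)))
    -- Connes' operator on pure tensors
    (hB : ∀ (m : ℕ) (deg : Fin (m + 1) → ℤ) (a : Fin (m + 1) → A),
      (∀ i, a i ∈ 𝒜 (deg i)) →
      Bup m (hpt k a) =
        ∑ i : Fin (m + 1),
          ((-1 : k) ^
            (((∑ j : Fin (m + 1), if (i : ℕ) ≤ (j : ℕ) then deg j else 0)
                + (m : ℤ) - ((i : ℕ) : ℤ) + 1) *
             ((∑ j : Fin (m + 1), if (j : ℕ) < (i : ℕ) then deg j else 0)
                + ((i : ℕ) : ℤ) - 1))) •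
            hpt k (Fin.cons (1 : A) (fun j : Fin (m + 1) => a (i + j))))
    (a : A) (D : ℤ) (ha : a ∈ 𝒜 D) (hD : Odd D)   -- a ∈ A^{odd}
    (hMC : d a + a * a = 0)                         -- Maurer-Cartan equation
    -- R(a) = Σ_{n≥0} 1 ⊗ a^{⊗n} at u⁰:
    (R : ℕ → ∀ m : ℕ, HChains k A m)
    (hR : ∀ m : ℕ, R 0 m = hpt k (Fin.cons (1 : A) (fun _ : Fin m => a)))
    (hR' : ∀ i : ℕ, 0 < i → ∀ m, R i m = 0) :
    -- (δ + uB)(R(a)) = 0 :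
    (∀ (i m : ℕ),
      δd m (R i m) + δm m (R i (m + 1)) +
        (Nat.rec (motive := fun m => HChains k A m) 0
          (fun m' _ => Bup m' (Nat.rec (motive := fun _ => ∀ l, HChains k A l)
              (fun l => 0) (fun i' _ => R i') i m'))
          m) = 0)
    -- in particular B(R(a)) = 0 in the normalized complex:
    ∧ (∀ m : ℕ, Bup m (hpt k (Fin.cons (1 : A) (fun _ : Fin m => a))) = 0) := by
  have hBzero := aux_Bzero k A 𝒜 hone Bup hB a D ha
  have key : ∀ m : ℕ, δd m (R 0 m) + δm m (R 0 (m + 1)) = 0 := by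
    intro m
    rw [hR m, hR (m + 1)]
    exact aux_key k A 𝒜 hone d hd1 δd δm hδd hδm a D ha hD hMC m
  refine ⟨?_, hBzero⟩
  intro i m
  cases m with
  | zero =>
    show δd 0 (R i 0) + δm 0 (R i 1) + 0 = 0
    rw [add_zero]
    cases i with
    | zero => exact key 0
    | succ i' =>
      rw [hR' (i' + 1) (Nat.succ_pos i') 0, hR' (i' + 1) (Nat.succ_pos i') 1,
        map_zero, map_zero, add_zero]
  | succ m' =>
    cases i with
    | zero =>
      show δd (m' + 1) (R 0 (m' + 1)) + δm (m' + 1) (R 0 (m' + 2)) + Bup m' 0 = 0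
      rw [map_zero, add_zero]
      exact key (m' + 1)
    | succ i' =>
      show δd (m' + 1) (R (i' + 1) (m' + 1)) + δm (m' + 1) (R (i' + 1) (m' + 2))
          + Bup m' (R i' m') = 0
      rw [hR' (i' + 1) (Nat.succ_pos i') (m' + 1), hR' (i' + 1) (Nat.succ_pos i') (m' + 2),
        map_zero, map_zero, zero_add, zero_add]
      cases i' with
      | zero => rw [hR m']; exact hBzero m'
      | succ i'' => rw [hR' (i'' + 1) (Nat.succ_pos i'') m', map_zero]
end
end

section
/- Let A be a dga, a ∈ A^{odd} with da + a·a = 0, and Y ∈ A^{odd}. Then in C̄_•(A,A), the derivative of P along Y equals the Hochschild boundary interaction: (d/dt)|_{t=0} P(a + tY) = Σ_{n≥0} Σ_{i=1}^{n} ± 1 ⊗ a^{⊗(i-1)} ⊗ Y ⊗ a^{⊗(n-i)}, and applying Connes' B to the chain Σ_{n≥0} Y ⊗ a^{⊗n} yields this same element, i.e. (d/dt)|_{t=0} R(a+tY) = B(Σ_{n≥0} Y ⊗ a^{⊗n}). -/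
open scoped TensorProduct

noncomputable section

/-- Multilinear expansion of `f (a + t•Y, …, a + t•Y)` to first order in `t`. -/
lemma aux_expand_lin {k M N ι : Type} [Fintype ι] [DecidableEq ι] [Field k]
    [AddCommGroup M] [Module k M] [AddCommGroup N] [Module k N]
    (f : MultilinearMap k (fun _ : ι => M) N) (a Y : M) :
    ∃ Q : k → N, ∀ t : k,
      f (fun _ => a + t • Y) =
        f (fun _ => a) + t • (∑ i : ι, f (fun j => if j = i then Y else a))
          + t ^ 2 • Q t := by
  refine ⟨fun t => ∑ s ∈ Finset.univ.filter (fun s : Finset ι => ¬ s.card ≤ 1),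
      t ^ (s.card - 2) • f (s.piecewise (fun _ => Y) (fun _ => a)), fun t => ?_⟩
  have h0 : (fun _ : ι => a + t • Y) = (fun _ : ι => t • Y) + (fun _ : ι => a) := by
    funext i; simp [add_comm]
  rw [h0, MultilinearMap.map_add_univ]
  have hterm : ∀ s : Finset ι,
      f (s.piecewise (fun _ => t • Y) (fun _ => a)) =
        t ^ s.card • f (s.piecewise (fun _ => Y) (fun _ => a)) := by
    intro s
    have : s.piecewise (fun _ : ι => t • Y) (fun _ => a) =
        s.piecewise (fun i => t • (s.piecewise (fun _ : ι => Y) (fun _ => a) i))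
          (s.piecewise (fun _ : ι => Y) (fun _ => a)) := by
      funext j; by_cases h : j ∈ s <;> simp [Finset.piecewise, h]
    rw [this, MultilinearMap.map_piecewise_smul]
    simp
  simp only [hterm]
  rw [← Finset.sum_filter_add_sum_filter_not Finset.univ (fun s : Finset ι => s.card ≤ 1)]
  congr 1
  · have hset : Finset.univ.filter (fun s : Finset ι => s.card ≤ 1) =
        insert (∅ : Finset ι) (Finset.univ.image (fun i : ι => {i})) := by
      ext s
      simp [Nat.le_one_iff_eq_zero_or_eq_one, Finset.card_eq_zero, Finset.card_eq_one, eq_comm]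
    rw [hset, Finset.sum_insert (by simp)]
    congr 1
    · simp
    · rw [Finset.sum_image (by intro i _ j _ h; simpa using h)]
      rw [Finset.smul_sum]
      refine Finset.sum_congr rfl fun i _ => ?_
      have : ({i} : Finset ι).piecewise (fun _ : ι => Y) (fun _ => a) =
          fun j => if j = i then Y else a := by
        funext j; simp [Finset.piecewise]
      simp [this]
  · rw [Finset.smul_sum]
    refine Finset.sum_congr rfl fun s hs => ?_
    simp only [Finset.mem_filter] at hs
    have h2 : 2 ≤ s.card := by omega
    rw [smul_smul, ← pow_add]
    congr 2
    omega

lemma aux_count_indic (n p : ℕ) (hp : p ≤ n) :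
    ∑ x ∈ Finset.range n, (if p ≤ x then (1:ℤ) else 0) = (n : ℤ) - p := by
  induction n with
  | zero => interval_cases p; simp
  | succ n ih =>
    rw [Finset.sum_range_succ]
    rcases Nat.lt_or_ge p (n+1) with h | h
    · have hp' : p ≤ n := by omega
      rw [ih hp', if_pos hp']
      push_cast; ring
    · have hp' : p = n + 1 := by omega
      subst hp'
      rw [if_neg (by omega), Finset.sum_eq_zero (fun x hx => by
        rw [Finset.mem_range] at hx; rw [if_neg (by omega)]), ]
      push_cast; ring

/-- For a dga `A`, a Maurer-Cartan element `a ∈ A^{odd}` and `Y ∈ A^{odd}`,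
the derivative `(d/dt)|₀ P(a + tY)` equals, in each tensor length, the sum
`Σᵢ 1 ⊗ a^{⊗(i-1)} ⊗ Y ⊗ a^{⊗(n-i)}`, and applying Connes' operator `B` to the chain
`Σ_{n≥0} Y ⊗ a^{⊗n}` yields this same element: `(d/dt)|₀ R(a + tY) = B(Σ_{n≥0} Y ⊗ a^{⊗n})`.
The derivative is taken componentwise (polynomial in `t` in each tensor degree): it is the
coefficient of `t` in the expansion of `P(a + tY)`. -/
theorem derivative_of_R_is_B_of_Y_chain
    (k A : Type) [Field k] [Ring A] [Algebra k A]
    (𝒜 : ℤ → Submodule k A)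
    (hone : (1 : A) ∈ 𝒜 0)
    (hmul : ∀ (i j : ℤ) (x y : A), x ∈ 𝒜 i → y ∈ 𝒜 j → x * y ∈ 𝒜 (i + j))
    (hinternal : DirectSum.IsInternal 𝒜)
    (d : A →ₗ[k] A) (hd1 : d 1 = 0) (hdd : ∀ x, d (d x) = 0)
    (hd_deg : ∀ (i : ℤ) (x : A), x ∈ 𝒜 i → d x ∈ 𝒜 (i + 1))
    (hLeib : ∀ (i : ℤ) (x y : A), x ∈ 𝒜 i → d (x * y) = d x * y + ((-1 : k) ^ i) • (x * d y))
    (Bup : ∀ m : ℕ, HChains k A m →ₗ[k] HChains k A (m + 1))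
    -- Connes' operator on pure tensors
    (hB : ∀ (m : ℕ) (deg : Fin (m + 1) → ℤ) (a : Fin (m + 1) → A),
      (∀ i, a i ∈ 𝒜 (deg i)) →
      Bup m (hpt k a) =
        ∑ i : Fin (m + 1),
          ((-1 : k) ^
            (((∑ j : Fin (m + 1), if (i : ℕ) ≤ (j : ℕ) then deg j else 0)
                + (m : ℤ) - ((i : ℕ) : ℤ) + 1) *
             ((∑ j : Fin (m + 1), if (j : ℕ) < (i : ℕ) then deg j else 0)
                + ((i : ℕ) : ℤ) - 1))) •
            hpt k (Fin.cons (1 : A) (fun j : Fin (m + 1) => a (i + j))))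
    (a : A) (D : ℤ) (ha : a ∈ 𝒜 D) (hD : Odd D)       -- a ∈ A^{odd}
    (hMC : d a + a * a = 0)                             -- Maurer-Cartan equation
    (Y : A) (E : ℤ) (hY : Y ∈ 𝒜 E) (hE : Odd E) :      -- Y ∈ A^{odd}
    ∀ m : ℕ,
      -- (d/dt)|₀ of the tensor-length-(m+1) component of P(a + tY):
      (∃ Q : k → HChains k A (m + 1),
        ∀ t : k,
          hpt k (Fin.cons (1 : A) (fun _ : Fin (m + 1) => a + t • Y)) =
            hpt k (Fin.cons (1 : A) (fun _ : Fin (m + 1) => a))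
            + t • (∑ i : Fin (m + 1),
                hpt k (Fin.cons (1 : A)
                  (fun j : Fin (m + 1) => if j = i then Y else a)))
            + t ^ 2 • Q t)
      -- ... equals the corresponding component of B(Σ_{n≥0} Y ⊗ a^{⊗n}):
      ∧ Bup m (hpt k (Fin.cons Y (fun _ : Fin m => a))) =
          ∑ i : Fin (m + 1),
            hpt k (Fin.cons (1 : A) (fun j : Fin (m + 1) => if j = i then Y else a)) := by
  intro m
  constructor
  · -- Part 1: the multilinear expansion
    set F : MultilinearMap k (fun _ : Fin (m + 1) => A) (HChains k A (m + 1)) :=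
      (TensorProduct.mk k A _ (1 : A)).compMultilinearMap
        ((PiTensorProduct.tprod k (s := fun _ : Fin (m + 1) => HAbar k A)).compLinearMap
          (fun _ => (Submodule.span k {(1 : A)}).mkQ)) with hF
    have hfg : ∀ g : Fin (m + 1) → A, hpt k (Fin.cons (1 : A) g) = F g := by
      intro g
      simp [hpt, hF, Fin.cons_zero, Fin.cons_succ, TensorProduct.mk_apply,
        Submodule.mkQ_apply]
    obtain ⟨Q, hQ⟩ := aux_expand_lin F a Y
    refine ⟨Q, fun t => ?_⟩
    rw [hfg, hfg]
    simp only [hfg]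
    exact hQ t
  · -- Part 2: applying Connes' operator
    have hmem : ∀ i : Fin (m + 1),
        (Fin.cons Y (fun _ : Fin m => a) : Fin (m+1) → A) i ∈ 𝒜 ((Fin.cons E (fun _ : Fin m => D) : Fin (m+1) → ℤ) i) := by
      intro i
      induction i using Fin.cases with
      | zero => simpa using hY
      | succ j => simpa using ha
    rw [hB m (Fin.cons E (fun _ : Fin m => D)) (Fin.cons Y (fun _ : Fin m => a)) hmem]
    have hsign : ∀ i : Fin (m + 1),
        ((-1 : k) ^
            (((∑ j : Fin (m + 1), if (i : ℕ) ≤ (j : ℕ)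
                then (Fin.cons E (fun _ : Fin m => D) : Fin (m+1) → ℤ) j else 0)
                + (m : ℤ) - ((i : ℕ) : ℤ) + 1) *
             ((∑ j : Fin (m + 1), if (j : ℕ) < (i : ℕ)
                then (Fin.cons E (fun _ : Fin m => D) : Fin (m+1) → ℤ) j else 0)
                + ((i : ℕ) : ℤ) - 1))) = (1 : k) := by
      intro i
      have hodd : ∀ j : Fin (m + 1), Odd ((Fin.cons E (fun _ : Fin m => D) : Fin (m+1) → ℤ) j) := by
        intro j
        induction j using Fin.cases with
        | zero => simpa using hE
        | succ j => simpa using hD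
      apply Even.neg_one_zpow
      apply Even.mul_right
      -- first factor is even
      have hcount : (∑ j : Fin (m + 1), if (i : ℕ) ≤ (j : ℕ) then (1:ℤ) else 0)
          = (m : ℤ) - ((i : ℕ) : ℤ) + 1 := by
        rw [Fin.sum_univ_eq_sum_range (fun x => if (i : ℕ) ≤ x then (1:ℤ) else 0) (m+1),
          aux_count_indic (m+1) i (by omega)]
        push_cast; ring
      have key : (∑ j : Fin (m + 1), if (i : ℕ) ≤ (j : ℕ)
            then (Fin.cons E (fun _ : Fin m => D) : Fin (m+1) → ℤ) j else 0)
          + (m : ℤ) - ((i : ℕ) : ℤ) + 1 =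
          ∑ j : Fin (m + 1), (if (i : ℕ) ≤ (j : ℕ)
            then (Fin.cons E (fun _ : Fin m => D) : Fin (m+1) → ℤ) j + 1 else 0) := by
        have hsplit : ∑ j : Fin (m + 1), (if (i : ℕ) ≤ (j : ℕ)
              then (Fin.cons E (fun _ : Fin m => D) : Fin (m+1) → ℤ) j + 1 else 0) =
            ∑ j : Fin (m + 1), ((if (i : ℕ) ≤ (j : ℕ)
              then (Fin.cons E (fun _ : Fin m => D) : Fin (m+1) → ℤ) j else 0)
              + (if (i : ℕ) ≤ (j : ℕ) then (1:ℤ) else 0)) :=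
          Finset.sum_congr rfl (fun j _ => by split <;> simp)
        rw [hsplit, Finset.sum_add_distrib, hcount]
        ring
      rw [key]
      exact Finset.even_sum _ (fun j _ => by
        split
        · exact (hodd j).add_one
        · exact Even.zero)
    refine Eq.trans (Finset.sum_congr rfl (fun i _ => by rw [hsign i, one_smul])) ?_
    -- reindex i ↦ -i
    refine Fintype.sum_equiv (Equiv.neg (Fin (m + 1))) _ _ fun i => ?_
    congr 1
    funext j
    induction j using Fin.cases with
    | zero => rfl
    | succ j =>
      simp only [Fin.cons_succ, Equiv.neg_apply]
      have harg : ∀ x : Fin (m + 1),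
          (Fin.cons Y (fun _ : Fin m => a) : Fin (m+1) → A) x = if x = 0 then Y else a := by
        intro x
        induction x using Fin.cases with
        | zero => simp
        | succ x => simp [Fin.succ_ne_zero]
      rw [harg]
      have heq : (i + j = 0) ↔ (j = -i) := by
        constructor
        · intro h; exact eq_neg_of_add_eq_zero_right h
        · intro h; subst h; simp
      simp only [heq]
end
end
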